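/- For every natural number n, the self-membership of the set of all sets of size different from n is independent in BST: letting α_n := ∃y∀x(x∈y ↔ ¬card_n(x)) and σ_n := ∀y(∀x(x∈y ↔ ¬card_n(x)) → y∈y), both BST ∪ {α_n, σ_n} and BST ∪ {α_n, ¬σ_n} are satisfiable. -/

import Mathlib

open FirstOrder FirstOrder.Language

namespace SetParadox

/-- The language with a single binary relation symbol `∈`. -/
def L : Language := ⟨fun _ => Empty, fun n => match n with | 2 => Unit | _ => Empty⟩

/-- The membership relation symbol. -/
def memRel : L.Relations 2 := Unit.unit

/-- `memF t₁ t₂` is the atomic formula `t₁ ∈ t₂`. -/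
def memF {n : ℕ} (t₁ t₂ : L.Term (Empty ⊕ Fin n)) : L.BoundedFormula Empty n :=
  memRel.boundedFormula₂ t₁ t₂

/-- Extensionality: `∀y∀z(∀x(x∈y ↔ x∈z) → y=z)`. -/
def extAx : L.Sentence :=
  ∀' ∀' ((∀' (memF (&2) (&0) ⇔ memF (&2) (&1))) ⟹ ((&0) =' (&1)))

/-- Basic set theory: the theory whose only axiom is extensionality. -/
def BST : L.Theory := {extAx}

/-- The UC-instance `∃y∀x(x∈y ↔ φ(x))` determined by a formula `φ` with one free
variable `x` (so that `y` does not occur free in `φ`). -/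
def UCinst (φ : L.BoundedFormula Empty 1) : L.Sentence :=
  ∃' ∀' (memF (&1) (&0) ⇔ φ.liftAt 1 0)

/-- Prefix a formula in context `k + 1` with `k` existential quantifiers,
yielding a formula in context `1`. -/
def exsN : ∀ (k : ℕ), L.BoundedFormula Empty (k + 1) → L.BoundedFormula Empty 1
  | 0, φ => φ
  | k + 1, φ => exsN k (∃' φ)

/-- Finite conjunction of a list of formulas. -/
def conjL {m : ℕ} : List (L.BoundedFormula Empty m) → L.BoundedFormula Empty m
  | [] => ⊤
  | φ :: l => φ ⊓ conjL l

/-- Finite disjunction of a list of formulas. -/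
def disjL {m : ℕ} : List (L.BoundedFormula Empty m) → L.BoundedFormula Empty m
  | [] => ⊥
  | φ :: l => φ ⊔ disjL l

/-- `card_n(y)`: `y` has exactly `n` elements.  For `n = 0` it is `∀x ¬x∈y`; for `n ≥ 1`
it is `∃x₁…∃xₙ(⋀_{i<j} xᵢ≠xⱼ ∧ ⋀_i xᵢ∈y ∧ ∀x(x∈y → ⋁_i x=xᵢ))`.
The free variable `y` is `&0`; the witnesses `xᵢ` are `&(i+1)`. -/
def cardF : ℕ → L.BoundedFormula Empty 1
  | 0 => ∀' ∼(memF (&1) (&0))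
  | m + 1 =>
    exsN (m + 1) <|
      conjL (((List.finRange (m + 1)) ×ˢ (List.finRange (m + 1))).filterMap fun p =>
          if p.1 < p.2 then some (∼((&p.1.succ) =' (&p.2.succ))) else none) ⊓
      conjL ((List.finRange (m + 1)).map fun i => memF (&i.succ) (&(0 : Fin (m + 2)))) ⊓
      (∀' (memF (&(Fin.last (m + 2))) (&(0 : Fin (m + 3))) ⟹
        disjL ((List.finRange (m + 1)).map fun i =>
          (&(Fin.last (m + 2))) =' (&(i.succ.castSucc : Fin (m + 3))))))

/-- `∀y(∀x(x∈y ↔ φ(x)) → y∈y)`: the set defined by `φ` is a member of itself. -/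
def selfMemOf (φ : L.BoundedFormula Empty 1) : L.Sentence :=
  ∀' ((∀' (memF (&1) (&0) ⇔ φ.liftAt 1 0)) ⟹ memF (&0) (&0))

/-! ### Auxiliary semantic lemmas -/

section Semantics

/-- Build an `L`-structure on `M` from a binary relation. -/
def struc {M : Type} (E : M → M → Prop) : L.Structure M where
  funMap := fun {n} f _ => f.elim
  RelMap := fun {n} r x => match n, r with | 2, _ => E (x 0) (x 1)

variable {M : Type} [inst : L.Structure M]

/-- Semantical membership relation. -/
def Em (b a : M) : Prop := Structure.RelMap memRel ![b, a]

@[simp] lemma realize_memF {n : ℕ} {t₁ t₂ : L.Term (Empty ⊕ Fin n)} {v xs} :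
    (memF t₁ t₂).Realize (M := M) v xs ↔
      Em (t₁.realize (Sum.elim v xs)) (t₂.realize (Sum.elim v xs)) :=
  BoundedFormula.realize_rel₂

omit inst in
@[simp] lemma Em_struc {E : M → M → Prop} (b a : M) : @Em M (struc E) b a ↔ E b a := Iff.rfl

omit inst in
lemma fin1_eq (g : Fin 1 → M) : g = ![g 0] := funext fun i => by fin_cases i; rfl

lemma realize_fin1 (φ : L.BoundedFormula Empty 1) (u v : Empty → M) (g : Fin 1 → M) :
    φ.Realize u g ↔ φ.Realize v ![g 0] := by
  have hu : u = v := funext fun e => e.elim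
  rw [← fin1_eq, hu]

lemma realize_conjL {m : ℕ} (l : List (L.BoundedFormula Empty m)) (v) (xs : Fin m → M) :
    (conjL l).Realize v xs ↔ ∀ φ ∈ l, φ.Realize v xs := by
  induction l with
  | nil => simp [conjL]
  | cons φ l ih => simp [conjL, ih]

lemma realize_disjL {m : ℕ} (l : List (L.BoundedFormula Empty m)) (v) (xs : Fin m → M) :
    (disjL l).Realize v xs ↔ ∃ φ ∈ l, φ.Realize v xs := by
  induction l with
  | nil => simp [disjL]
  | cons φ l ih => simp [disjL, ih]

/-- The valuation extension used to interpret `exsN`. -/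
def app : ∀ k, (Fin 1 → M) → (Fin k → M) → (Fin (k + 1) → M)
  | 0, xs, _ => xs
  | k + 1, xs, w => Fin.snoc (app k xs (Fin.init w)) (w (Fin.last k))

omit inst in
lemma app_eq (k : ℕ) (xs : Fin 1 → M) (w : Fin k → M) :
    app k xs w = Fin.cases (xs 0) w := by
  induction k with
  | zero =>
    funext j
    fin_cases j
    rfl
  | succ k ih =>
    funext j
    rw [app, ih]
    refine Fin.lastCases ?_ (fun i => ?_) j
    · rw [Fin.snoc_last, ← Fin.succ_last, Fin.cases_succ]
    · rw [Fin.snoc_castSucc]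
      refine Fin.cases ?_ (fun i' => ?_) i
      · simp
      · rw [Fin.cases_succ, Fin.init, ← Fin.succ_castSucc, Fin.cases_succ]

lemma realize_exsN (k : ℕ) (φ : L.BoundedFormula Empty (k + 1)) (v) (xs : Fin 1 → M) :
    (exsN k φ).Realize v xs ↔ ∃ w : Fin k → M, φ.Realize v (app k xs w) := by
  induction k generalizing xs with
  | zero =>
    constructor
    · exact fun h => ⟨default, h⟩
    · rintro ⟨w, h⟩; exact h
  | succ k ih =>
    rw [exsN, ih]
    simp only [BoundedFormula.realize_ex]
    constructor
    · rintro ⟨w, b, h⟩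
      refine ⟨Fin.snoc w b, ?_⟩
      rw [app]
      simpa using h
    · rintro ⟨w, h⟩
      exact ⟨Fin.init w, w (Fin.last k), h⟩

omit inst in
@[simp] lemma snoc_zero' {k : ℕ} (f : Fin (k + 1) → M) (b : M) :
    (Fin.snoc f b : Fin (k + 2) → M) 0 = f 0 := by
  have : (0 : Fin (k + 2)) = Fin.castSucc 0 := rfl
  rw [this, Fin.snoc_castSucc]

lemma realize_cardF_succ (m : ℕ) (a : M) (v : Empty → M) :
    (cardF (m + 1)).Realize v ![a] ↔
      ∃ w : Fin (m + 1) → M, (∀ i j, i < j → w i ≠ w j) ∧ (∀ i, Em (w i) a) ∧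
        (∀ b, Em b a → ∃ i, b = w i) := by
  rw [cardF, realize_exsN]
  refine exists_congr fun w => ?_
  rw [app_eq]
  have hxs : (![a] : Fin 1 → M) 0 = a := rfl
  rw [hxs]
  simp only [BoundedFormula.realize_inf, realize_conjL, BoundedFormula.realize_all,
    BoundedFormula.realize_imp, realize_disjL, List.mem_filterMap, List.mem_map,
    List.mem_product, List.mem_finRange, true_and, and_true,
    Option.ite_none_right_eq_some, Option.some_inj, realize_memF,
    BoundedFormula.realize_not, BoundedFormula.realize_bdEqual,
    Term.realize_var, Sum.elim_inr, Fin.snoc_last, snoc_zero', Fin.snoc_castSucc,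
    Fin.cases_zero, Fin.cases_succ, Function.comp_apply, forall_exists_index, and_imp,
    forall_apply_eq_imp_iff, forall_apply_eq_imp_iff₂, exists_exists_eq_and, forall_eq']
  rw [and_assoc]
  refine and_congr ?_ Iff.rfl
  constructor
  · intro h i j hij
    have := h _ (i, j) (by simp) hij rfl
    simpa using this
  · intro h φ x _ hlt hφ
    subst hφ
    simpa using h x.1 x.2 hlt

lemma realize_cardF (k : ℕ) (a : M) (v : Empty → M) :
    (cardF k).Realize v ![a] ↔ ∃ s : Finset M, s.card = k ∧ ∀ b, Em b a ↔ b ∈ s := by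
  classical
  cases k with
  | zero =>
    rw [cardF]
    simp only [BoundedFormula.realize_all, BoundedFormula.realize_not, realize_memF,
      Term.realize_var, Sum.elim_inr]
    constructor
    · intro h
      refine ⟨∅, rfl, fun b => ?_⟩
      simp only [Finset.notMem_empty, iff_false]
      have := h b
      simpa [Fin.snoc] using this
    · rintro ⟨s, hs, hmem⟩ b
      simp only [Finset.card_eq_zero] at hs
      subst hs
      simp only [Finset.notMem_empty, iff_false] at hmem
      simpa [Fin.snoc] using hmem _
  | succ m =>
    rw [realize_cardF_succ]
    constructor
    · rintro ⟨w, hdist, hmem, hcov⟩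
      have hinj : Function.Injective w := by
        intro i j hij
        by_contra hne
        rcases lt_or_gt_of_ne hne with h | h
        · exact hdist i j h hij
        · exact hdist j i h hij.symm
      refine ⟨Finset.univ.image w, ?_, fun b => ?_⟩
      · rw [Finset.card_image_of_injective _ hinj, Finset.card_univ, Fintype.card_fin]
      · simp only [Finset.mem_image, Finset.mem_univ, true_and]
        constructor
        · intro hb
          obtain ⟨i, hi⟩ := hcov b hb
          exact ⟨i, hi.symm⟩
        · rintro ⟨i, rfl⟩
          exact hmem i
    · rintro ⟨s, hs, hmem⟩
      have e : s ≃ Fin (m + 1) := hs ▸ s.equivFin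
      refine ⟨fun i => (e.symm i : M), fun i j hij hw => ?_, fun i => ?_, fun b hb => ?_⟩
      · exact absurd (e.symm.injective (Subtype.ext hw)) hij.ne
      · exact (hmem _).2 (e.symm i).2
      · exact ⟨e ⟨b, (hmem b).1 hb⟩, by simp⟩

lemma realize_extAx : (M ⊨ extAx) ↔ ∀ y z : M, (∀ x, Em x y ↔ Em x z) → y = z := by
  rw [extAx]
  simp only [Sentence.Realize, Formula.Realize, BoundedFormula.realize_all,
    BoundedFormula.realize_imp, BoundedFormula.realize_iff, realize_memF,
    BoundedFormula.realize_bdEqual, Term.realize_var, Sum.elim_inr]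
  refine forall_congr' fun y => forall_congr' fun z => ?_
  refine imp_congr (forall_congr' fun x => ?_) (by simp [Fin.snoc])
  simp [Fin.snoc]

lemma realize_UCinst (φ : L.BoundedFormula Empty 1) :
    (M ⊨ UCinst φ) ↔ ∃ y : M, ∀ x, Em x y ↔ φ.Realize default ![x] := by
  rw [UCinst]
  simp only [Sentence.Realize, Formula.Realize, BoundedFormula.realize_ex,
    BoundedFormula.realize_all, BoundedFormula.realize_iff, realize_memF,
    Term.realize_var, Sum.elim_inr]
  refine exists_congr fun y => forall_congr' fun x =>
    iff_congr (by simp [Fin.snoc]) ?_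
  rw [BoundedFormula.realize_liftAt_one (Nat.zero_le 1),
    realize_fin1 φ _ (default : Empty → M)]
  simp [Fin.snoc]

lemma realize_selfMemOf (φ : L.BoundedFormula Empty 1) :
    (M ⊨ selfMemOf φ) ↔
      ∀ y : M, (∀ x, Em x y ↔ φ.Realize default ![x]) → Em y y := by
  rw [selfMemOf]
  simp only [Sentence.Realize, Formula.Realize, BoundedFormula.realize_all,
    BoundedFormula.realize_imp, BoundedFormula.realize_iff, realize_memF,
    Term.realize_var, Sum.elim_inr]
  refine forall_congr' fun y => imp_congr (forall_congr' fun x =>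
    iff_congr (by simp [Fin.snoc]) ?_) (by simp [Fin.snoc])
  rw [BoundedFormula.realize_liftAt_one (Nat.zero_le 1),
    realize_fin1 φ _ (default : Empty → M)]
  simp [Fin.snoc]

end Semantics

/-! ### The two models -/

section Models

variable (n : ℕ)

/-- Membership in the first model: everything is a member of `Fin.last n`. -/
def E1 (b a : Fin (n + 1)) : Prop := b < a ∨ a = Fin.last n

/-- Membership in the second model. -/
def E2 (b a : Fin (n + 1)) : Prop := b < a

lemma card_members_E2 {a : Fin (n + 1)} {s : Finset (Fin (n + 1))}
    (hmem : ∀ b, b < a ↔ b ∈ s) : s.card = (a : ℕ) := by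
  have : s = Finset.Iio a := by
    ext b
    rw [← hmem b, Finset.mem_Iio]
  rw [this, Fin.card_Iio]

section ModelOne

/-- The first model. -/
def instM1 : L.Structure (Fin (n + 1)) := struc (E1 n)

attribute [local instance] instM1

lemma M1_not_cardF (a : Fin (n + 1)) (v : Empty → Fin (n + 1)) :
    ¬ (cardF n).Realize (M := Fin (n + 1)) v ![a] := by
  rw [realize_cardF]
  rintro ⟨s, hcard, hmem⟩
  change ∀ b, (b < a ∨ a = Fin.last n) ↔ b ∈ s at hmem
  by_cases ha : a = Fin.last n
  · have huniv : Finset.univ ⊆ s := fun b _ => (hmem b).1 (Or.inr ha)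
    have := Finset.card_le_card huniv
    rw [hcard, Finset.card_univ, Fintype.card_fin] at this
    omega
  · have hmem' : ∀ b, b < a ↔ b ∈ s := by
      intro b
      rw [← hmem b]
      exact ⟨Or.inl, fun h => h.elim id fun h' => absurd h' ha⟩
    have := card_members_E2 n hmem'
    rw [hcard] at this
    exact ha (Fin.ext (by rw [Fin.val_last]; omega))

@[simp] lemma Em_M1 (b a : Fin (n + 1)) :
    @Em _ (instM1 n) b a ↔ b < a ∨ a = Fin.last n := Iff.rfl

lemma M1_extAx : (Fin (n + 1)) ⊨ extAx := by
  rw [realize_extAx]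
  intro y z h
  by_cases hy : y = Fin.last n <;> by_cases hz : z = Fin.last n
  · rw [hy, hz]
  · exfalso
    have := ((h (Fin.last n)).1 (Or.inr hy)).resolve_right hz
    exact absurd (Fin.le_last z) (not_le.2 this)
  · exfalso
    have := ((h (Fin.last n)).2 (Or.inr hz)).resolve_right hy
    exact absurd (Fin.le_last y) (not_le.2 this)
  · have h' : ∀ x, x < y ↔ x < z := fun x =>
      ⟨fun hx => ((h x).1 (Or.inl hx)).resolve_right hz,
       fun hx => ((h x).2 (Or.inl hx)).resolve_right hy⟩
    by_contra hne
    rcases lt_or_gt_of_ne hne with hlt | hlt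
    · exact lt_irrefl y ((h' y).2 hlt)
    · exact lt_irrefl z ((h' z).1 hlt)

lemma M1_UC : (Fin (n + 1)) ⊨ UCinst (∼(cardF n)) := by
  rw [realize_UCinst]
  refine ⟨Fin.last n, fun x => iff_of_true (Or.inr rfl) ?_⟩
  rw [BoundedFormula.realize_not]
  exact M1_not_cardF n x _

lemma M1_self : (Fin (n + 1)) ⊨ selfMemOf (∼(cardF n)) := by
  rw [realize_selfMemOf]
  intro y h
  refine (h y).2 ?_
  rw [BoundedFormula.realize_not]
  exact M1_not_cardF n y _

end ModelOne

section ModelTwo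

/-- The second model. -/
def instM2 : L.Structure (Fin (n + 1)) := struc (E2 n)

attribute [local instance] instM2

@[simp] lemma Em_M2 (b a : Fin (n + 1)) : @Em _ (instM2 n) b a ↔ b < a := Iff.rfl

lemma M2_cardF_iff (a : Fin (n + 1)) (v : Empty → Fin (n + 1)) :
    (cardF n).Realize (M := Fin (n + 1)) v ![a] ↔ a = Fin.last n := by
  rw [realize_cardF]
  constructor
  · rintro ⟨s, hcard, hmem⟩
    simp only [Em_M2] at hmem
    have := card_members_E2 n hmem
    rw [hcard] at this
    exact Fin.ext (by rw [Fin.val_last]; omega)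
  · rintro rfl
    refine ⟨Finset.Iio (Fin.last n), by rw [Fin.card_Iio, Fin.val_last], fun b => ?_⟩
    rw [Em_M2, Finset.mem_Iio]

lemma M2_extAx : (Fin (n + 1)) ⊨ extAx := by
  rw [realize_extAx]
  intro y z h
  simp only [Em_M2] at h
  by_contra hne
  rcases lt_or_gt_of_ne hne with hlt | hlt
  · exact lt_irrefl y ((h y).2 hlt)
  · exact lt_irrefl z ((h z).1 hlt)

lemma M2_lt_last_iff (x : Fin (n + 1)) : x < Fin.last n ↔ x ≠ Fin.last n :=
  ⟨ne_of_lt, fun h => lt_of_le_of_ne (Fin.le_last x) h⟩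

lemma M2_UC : (Fin (n + 1)) ⊨ UCinst (∼(cardF n)) := by
  rw [realize_UCinst]
  refine ⟨Fin.last n, fun x => ?_⟩
  rw [BoundedFormula.realize_not, M2_cardF_iff, Em_M2, M2_lt_last_iff]

lemma M2_not_self : (Fin (n + 1)) ⊨ ∼(selfMemOf (∼(cardF n))) := by
  rw [Sentence.realize_not, realize_selfMemOf]
  push_neg
  refine ⟨Fin.last n, fun x => ?_, ?_⟩
  · rw [BoundedFormula.realize_not, M2_cardF_iff, Em_M2, M2_lt_last_iff]
  · rw [Em_M2]
    exact lt_irrefl _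

end ModelTwo

end Models

/-- For every `n`, the self-membership of the set of all sets of size different from `n`
is independent in `BST`: with `α_n := ∃y∀x(x∈y ↔ ¬card_n(x))` and
`σ_n := ∀y(∀x(x∈y ↔ ¬card_n(x)) → y∈y)`, both `BST ∪ {α_n, σ_n}` and
`BST ∪ {α_n, ¬σ_n}` are satisfiable. -/
theorem size_ne_n_selfMem_independent (n : ℕ) :
    (BST ∪ {UCinst (∼(cardF n)), selfMemOf (∼(cardF n))}).IsSatisfiable ∧
    (BST ∪ {UCinst (∼(cardF n)), ∼(selfMemOf (∼(cardF n)))}).IsSatisfiable := by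
  constructor
  · letI := instM1 n
    haveI : (Fin (n + 1)) ⊨ (BST ∪ {UCinst (∼(cardF n)), selfMemOf (∼(cardF n))}) := by
      rw [Theory.model_union_iff]
      refine ⟨?_, ?_⟩
      · rw [BST, Theory.model_singleton_iff]
        exact M1_extAx n
      · rw [Theory.model_insert_iff, Theory.model_singleton_iff]
        exact ⟨M1_UC n, M1_self n⟩
    exact Theory.Model.isSatisfiable (Fin (n + 1))
  · letI := instM2 n
    haveI : (Fin (n + 1)) ⊨ (BST ∪ {UCinst (∼(cardF n)), ∼(selfMemOf (∼(cardF n)))}) := by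
      rw [Theory.model_union_iff]
      refine ⟨?_, ?_⟩
      · rw [BST, Theory.model_singleton_iff]
        exact M2_extAx n
      · rw [Theory.model_insert_iff, Theory.model_singleton_iff]
        exact ⟨M2_UC n, M2_not_self n⟩
    exact Theory.Model.isSatisfiable (Fin (n + 1))

end SetParadox
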